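/- arXiv:1403.3037 — 3 statements merged into one kernel-verified Lean document; each statement's English description precedes it below -/
import Mathlib

section
/- Let p be a prime, e ≥ 1, q = p^e, and let f(T) = T⁴ − aT³ + bT² − qaT + q² ∈ ℤ[T] be irreducible over ℚ with all complex roots of absolute value √q. Let K = ℚ[T]/(f(T)), ϖ ∈ K the image of T, ϖ̄ = q/ϖ, and suppose the order ℤ[ϖ, ϖ̄] is the full ring of integers 𝒪_K of K. Then ℤ[ϖ + ϖ̄] is the ring of integers of the subfield K⁺ = ℚ(ϖ + ϖ̄) of K; that is, ℤ[ϖ + ϖ̄] equals the integral closure of ℤ in ℚ(ϖ + ϖ̄). -/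
open Polynomial

theorem stmt15 (p : ℕ) (hp : p.Prime) (e : ℕ) (he : 1 ≤ e) (q : ℕ) (hq : q = p ^ e)
    (a b : ℤ)
    (f : ℚ[X])
    (hf : f = X ^ 4 - C (a : ℚ) * X ^ 3 + C (b : ℚ) * X ^ 2
        - C ((q : ℚ) * (a : ℚ)) * X + C ((q : ℚ) ^ 2))
    (hirr : Irreducible f)
    (hroots : ∀ z : ℂ, Polynomial.aeval z f = 0 → ‖z‖ = Real.sqrt q)
    (K : Type*) [Field K] [Algebra ℚ K]
    (ϖ : K) (hϖ : Polynomial.aeval ϖ f = 0)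
    (hgen : Algebra.adjoin ℚ {ϖ} = ⊤)
    (ϖbar : K) (hbar : ϖ * ϖbar = (q : K))
    (hmax : Algebra.adjoin ℤ {ϖ, ϖbar} = integralClosure ℤ K) :
    ∀ x : K, x ∈ Algebra.adjoin ℤ {ϖ + ϖbar} ↔
      (IsIntegral ℤ x ∧ x ∈ IntermediateField.adjoin ℚ {ϖ + ϖbar}) := by
  intro x
  have hchar : CharZero K := charZero_of_injective_algebraMap (algebraMap ℚ K).injective
  have hqpos : 0 < q := hq ▸ pow_pos hp.pos e
  have hqQ : (q : ℚ) ≠ 0 := Nat.cast_ne_zero.mpr hqpos.ne'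
  have hqK : (q : K) ≠ 0 := Nat.cast_ne_zero.mpr hqpos.ne'
  -- basic relations
  have hrel : ϖ^4 - (a:K)*ϖ^3 + (b:K)*ϖ^2 - (q:K)*(a:K)*ϖ + (q:K)^2 = 0 := by
    have hϖ' := hϖ
    rw [hf] at hϖ'
    simp only [map_add, map_sub, map_mul, map_pow, aeval_X, aeval_C, map_natCast,
      map_intCast] at hϖ'
    linear_combination hϖ'
  have hϖ0 : ϖ ≠ 0 := by
    intro h
    rw [h, zero_mul] at hbar
    exact hqK hbar.symm
  set t := ϖ + ϖbar with htdef
  have hπt : ϖ * t = ϖ^2 + (q:K) := by linear_combination hbar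
  have hbarq : (q:K) * ϖbar = (q:K)*(a:K) - (b:K)*ϖ + (a:K)*ϖ^2 - ϖ^3 :=
    mul_left_cancel₀ hϖ0 (by linear_combination (q:K)*hbar + hrel)
  have ht2 : t^2 = (a:K)*t + (2*(q:K) - (b:K)) := by
    apply mul_left_cancel₀ (pow_ne_zero 2 hϖ0)
    linear_combination hrel + (2*ϖ^2 + ϖ*ϖbar + (q:K) - (a:K)*ϖ)*hbar
  -- f is the minimal polynomial of ϖ, hence 1, ϖ, ϖ², ϖ³ are ℚ-linearly independent
  have hmonic : f.Monic := by rw [hf]; monicity!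
  have hdeg : f.natDegree = 4 := by rw [hf]; compute_degree!
  have hmin : f = minpoly ℚ ϖ := minpoly.eq_of_irreducible_of_monic hirr hϖ hmonic
  have hLI : ∀ c0 c1 c2 c3 : ℚ, (c0:K) + (c1:K)*ϖ + (c2:K)*ϖ^2 + (c3:K)*ϖ^3 = 0 →
      c0 = 0 ∧ c1 = 0 ∧ c2 = 0 ∧ c3 = 0 := by
    intro c0 c1 c2 c3 h
    set g : ℚ[X] := C c0 + C c1 * X + C c2 * X^2 + C c3 * X^3 with hgdef
    have hga : Polynomial.aeval ϖ g = 0 := by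
      simp only [hgdef, map_add, map_mul, map_pow, aeval_C, aeval_X, eq_ratCast]
      linear_combination h
    have hg0 : g = 0 := by
      by_contra hne
      have hdvd : f ∣ g := hmin ▸ minpoly.dvd ℚ ϖ hga
      have h1 : f.natDegree ≤ g.natDegree := Polynomial.natDegree_le_of_dvd hdvd hne
      have h2 : g.natDegree ≤ 3 := by rw [hgdef]; compute_degree
      omega
    refine ⟨?_, ?_, ?_, ?_⟩
    · have := congrArg (fun pp => coeff pp 0) hg0; simpa [hgdef, coeff_one] using this
    · have := congrArg (fun pp => coeff pp 1) hg0; simpa [hgdef] using this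
    · have := congrArg (fun pp => coeff pp 2) hg0; simpa [hgdef] using this
    · have := congrArg (fun pp => coeff pp 3) hg0; simpa [hgdef] using this
  constructor
  · -- easy direction
    intro hx
    have htmem : t ∈ Algebra.adjoin ℤ ({ϖ, ϖbar} : Set K) :=
      add_mem (Algebra.subset_adjoin (by simp)) (Algebra.subset_adjoin (by simp))
    have htint : IsIntegral ℤ t := by rw [hmax] at htmem; exact htmem
    constructor
    · have hle : Algebra.adjoin ℤ {t} ≤ integralClosure ℤ K := by
        apply Algebra.adjoin_le
        rintro y hy
        rw [Set.mem_singleton_iff] at hy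
        rw [hy]
        exact htint
      exact hle hx
    · have hle : Algebra.adjoin ℤ {t} ≤
          Subalgebra.restrictScalars ℤ (IntermediateField.adjoin ℚ {t}).toSubalgebra := by
        apply Algebra.adjoin_le
        rintro y hy
        rw [Set.mem_singleton_iff] at hy
        rw [hy]
        exact IntermediateField.subset_adjoin ℚ {t} rfl
      exact hle hx
  · -- hard direction
    rintro ⟨hint, hfield⟩
    -- x lies in ℤ[ϖ, ϖbar], so it has an integral representation
    have hx1 : x ∈ Algebra.adjoin ℤ ({ϖ, ϖbar} : Set K) := by
      rw [hmax]; exact hint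
    have h1 : ϖ^2 = ϖ*t - (q:K) := by linear_combination -hπt
    have h3 : ϖ^2*t = (a:K)*(ϖ*t) + (2*(q:K)-(b:K))*ϖ - (q:K)*t := by
      linear_combination t*h1 + ϖ*ht2
    have h4 : ϖ*t^2 = (a:K)*(ϖ*t) + (2*(q:K)-(b:K))*ϖ := by linear_combination ϖ*ht2
    have h5 : ϖ^2*t^2 = ((a:K)^2+(2*(q:K)-(b:K)))*(ϖ*t) + (a:K)*(2*(q:K)-(b:K))*ϖ
        - (q:K)*(a:K)*t - (q:K)*(2*(q:K)-(b:K)) := by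
      linear_combination t^2*h1 + (ϖ*t)*ht2 + (a:K)*h4 - (q:K)*ht2
    have hrep : ∃ m0 m1 m2 m3 : ℤ,
        x = (m0:K) + (m1:K)*ϖ + (m2:K)*t + (m3:K)*(ϖ*t) := by
      refine Algebra.adjoin_induction ?_ ?_ ?_ ?_ hx1
      · rintro z hz
        rcases hz with rfl | rfl
        · exact ⟨0, 1, 0, 0, by push_cast; ring⟩
        · exact ⟨0, -1, 1, 0, by push_cast; ring⟩
      · intro r
        exact ⟨r, 0, 0, 0, by push_cast; simp⟩
      · rintro u v _ _ ⟨x0, x1, x2, x3, rfl⟩ ⟨y0, y1, y2, y3, rfl⟩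
        exact ⟨x0+y0, x1+y1, x2+y2, x3+y3, by push_cast; ring⟩
      · rintro u v _ _ ⟨x0, x1, x2, x3, rfl⟩ ⟨y0, y1, y2, y3, rfl⟩
        refine ⟨x0*y0 - (q:ℤ)*(x1*y1) + (2*(q:ℤ)-b)*(x2*y2) - (q:ℤ)*(2*(q:ℤ)-b)*(x3*y3),
          x0*y1+x1*y0 + (2*(q:ℤ)-b)*(x1*y3+x3*y1) + (2*(q:ℤ)-b)*(x2*y3+x3*y2)
            + a*(2*(q:ℤ)-b)*(x3*y3),
          x0*y2+x2*y0 + a*(x2*y2) - (q:ℤ)*(x1*y3+x3*y1) - (q:ℤ)*a*(x3*y3),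
          x0*y3+x3*y0 + x1*y1 + x1*y2+x2*y1 + a*(x1*y3+x3*y1) + a*(x2*y3+x3*y2)
            + (a^2+2*(q:ℤ)-b)*(x3*y3), ?_⟩
        push_cast
        linear_combination (norm := (push_cast; ring1))
          ((x1:K)*(y1:K))*h1 + ((x2:K)*(y2:K))*ht2 + ((x1:K)*(y3:K)+(x3:K)*(y1:K))*h3
          + ((x2:K)*(y3:K)+(x3:K)*(y2:K))*h4 + ((x3:K)*(y3:K))*h5
    obtain ⟨m0, m1, m2, m3, hxeq⟩ := hrep
    -- x lies in ℚ(t), so x = r0 + r1 t with r0, r1 ∈ ℚ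
    have hratrep : ∃ r0 r1 : ℚ, x = (r0:K) + (r1:K)*t := by
      set g2 : ℚ[X] := X^2 - C (a:ℚ)*X - C (2*(q:ℚ) - (b:ℚ)) with hg2def
      have hg2monic : g2.Monic := by rw [hg2def]; monicity!
      have hg2root : Polynomial.aeval t g2 = 0 := by
        simp only [hg2def, map_sub, map_mul, map_pow, aeval_C, aeval_X, eq_ratCast]
        push_cast
        linear_combination ht2
      have htint : IsIntegral ℚ t := ⟨g2, hg2monic, hg2root⟩
      have hsub : (IntermediateField.adjoin ℚ {t}).toSubalgebra = Algebra.adjoin ℚ {t} :=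
        IntermediateField.adjoin_simple_toSubalgebra_of_isAlgebraic htint.isAlgebraic
      have hx2 : x ∈ Algebra.adjoin ℚ {t} := by
        rw [← hsub]; exact hfield
      rw [Algebra.adjoin_singleton_eq_range_aeval] at hx2
      obtain ⟨g, hg⟩ := hx2
      have hdeg2 : g2.degree = 2 := by rw [hg2def]; compute_degree!
      have hdr : (g %ₘ g2).degree ≤ 1 := by
        have h := degree_modByMonic_lt g hg2monic
        rw [hdeg2] at h
        exact Order.le_of_lt_succ (by exact_mod_cast h)
      have hval : Polynomial.aeval t g = Polynomial.aeval t (g %ₘ g2) := by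
        conv_lhs => rw [← modByMonic_add_div g g2]
        simp [hg2root]
      refine ⟨(g %ₘ g2).coeff 0, (g %ₘ g2).coeff 1, ?_⟩
      rw [← hg]; show Polynomial.aeval t g = _; rw [hval]
      conv_lhs => rw [eq_X_add_C_of_degree_le_one hdr]
      simp only [map_add, map_mul, aeval_C, aeval_X, eq_ratCast]
      ring
    obtain ⟨r0, r1, hxr⟩ := hratrep
    have E : (m0:K) + (m1:K)*ϖ + (m2:K)*t + (m3:K)*(ϖ*t) = (r0:K) + (r1:K)*t := by
      rw [← hxeq, hxr]
    obtain ⟨hc0, hc1, hc2, hc3⟩ := hLI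
      ((q:ℚ)*(m0:ℚ) + ((m2:ℚ) - r1)*((q:ℚ)*(a:ℚ)) + (q:ℚ)^2*(m3:ℚ) - (q:ℚ)*r0)
      ((q:ℚ)*(m1:ℚ) + ((m2:ℚ) - r1)*((q:ℚ) - (b:ℚ)))
      (((m2:ℚ) - r1)*(a:ℚ) + (q:ℚ)*(m3:ℚ))
      (-((m2:ℚ) - r1))
      (by
        rw [htdef] at E hπt
        linear_combination (norm := (push_cast; ring1))
          (q:K)*E - ((m2:K)-(r1:K))*hbarq - (q:K)*(m3:K)*hπt)
    have hδ : (m2:ℚ) = r1 := by linarith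
    have hm3 : m3 = 0 := by
      have h' : (q:ℚ)*(m3:ℚ) = 0 := by rw [hδ] at hc2; simpa using hc2
      exact_mod_cast (mul_eq_zero.mp h').resolve_left hqQ
    have hm1 : m1 = 0 := by
      have h' : (q:ℚ)*(m1:ℚ) = 0 := by rw [hδ] at hc1; simpa using hc1
      exact_mod_cast (mul_eq_zero.mp h').resolve_left hqQ
    have hxfin : x = (m0:K) + (m2:K)*t := by
      rw [hxeq, hm1, hm3]; push_cast; ring
    rw [hxfin]
    refine add_mem ?_ (mul_mem ?_ (Algebra.subset_adjoin rfl))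
    · have h' : algebraMap ℤ K m0 ∈ Algebra.adjoin ℤ {t} := Subalgebra.algebraMap_mem _ m0
      simpa using h'
    · have h' : algebraMap ℤ K m2 ∈ Algebra.adjoin ℤ {t} := Subalgebra.algebraMap_mem _ m2
      simpa using h'
end

section
/- Let p be a prime, e ≥ 1, q = p^e, and let f(T) = T⁴ − aT³ + bT² − qaT + q² ∈ ℤ[T] be irreducible over ℚ with all complex roots of absolute value √q. Let K = ℚ[T]/(f(T)), ϖ ∈ K the image of T, ϖ̄ = q/ϖ, and suppose ℤ[ϖ, ϖ̄] is the full ring of integers 𝒪_K of K. Then for every prime ℓ ≠ p, the inclusion ℤ[ϖ] ⊆ 𝒪_K becomes an isomorphism after localizing at ℓ: for every z ∈ 𝒪_K there exists an integer c not divisible by ℓ with c·z ∈ ℤ[ϖ]. Equivalently, 𝒪_K ⊗ ℤ_(ℓ) ≅ ℤ_(ℓ)[T]/(f(T)). -/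
open Polynomial

theorem stmt16 (p : ℕ) (hp : p.Prime) (e : ℕ) (he : 1 ≤ e) (q : ℕ) (hq : q = p ^ e)
    (a b : ℤ)
    (f : ℚ[X])
    (hf : f = X ^ 4 - C (a : ℚ) * X ^ 3 + C (b : ℚ) * X ^ 2
        - C ((q : ℚ) * (a : ℚ)) * X + C ((q : ℚ) ^ 2))
    (hirr : Irreducible f)
    (hroots : ∀ z : ℂ, Polynomial.aeval z f = 0 → ‖z‖ = Real.sqrt q)
    (K : Type*) [Field K] [Algebra ℚ K]
    (ϖ : K) (hϖ : Polynomial.aeval ϖ f = 0)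
    (hgen : Algebra.adjoin ℚ {ϖ} = ⊤)
    (ϖbar : K) (hbar : ϖ * ϖbar = (q : K))
    (hmax : Algebra.adjoin ℤ {ϖ, ϖbar} = integralClosure ℤ K)
    (ℓ : ℕ) (hℓ : ℓ.Prime) (hℓp : ℓ ≠ p) :
    ∀ z : K, IsIntegral ℤ z →
      ∃ c : ℤ, ¬ ((ℓ : ℤ) ∣ c) ∧ c • z ∈ Algebra.adjoin ℤ {ϖ} := by
  intro z hz
  have hq0 : q ≠ 0 := by
    rw [hq]; exact pow_ne_zero _ hp.pos.ne'
  haveI : CharZero K := charZero_of_injective_algebraMap (algebraMap ℚ K).injective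
  have hqK : (q : K) ≠ 0 := Nat.cast_ne_zero.mpr hq0
  have hϖne : ϖ ≠ 0 := by
    intro h; apply hqK; rw [← hbar, h, zero_mul]
  -- the polynomial equation
  have heq : ϖ ^ 4 - (a : K) * ϖ ^ 3 + (b : K) * ϖ ^ 2
      - (q : K) * (a : K) * ϖ + (q : K) ^ 2 = 0 := by
    have := hϖ
    rw [hf] at this
    simpa [map_sub, map_add, map_mul, map_pow, aeval_X, aeval_C] using this
  have hqbar : (q : K) * ϖbar
      = (a : K) * ϖ ^ 2 + (q : K) * (a : K) - ϖ ^ 3 - (b : K) * ϖ := by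
    apply mul_left_cancel₀ hϖne
    linear_combination (q : K) * hbar + heq
  set A := Algebra.adjoin ℤ ({ϖ} : Set K) with hA
  have hϖA : ϖ ∈ A := Algebra.subset_adjoin rfl
  have hintA : ∀ m : ℤ, (m : K) ∈ A := fun m => by
    simpa using Subalgebra.algebraMap_mem A m
  have hqbarA : (q : K) * ϖbar ∈ A := by
    rw [hqbar]
    refine sub_mem (sub_mem (add_mem (mul_mem (hintA a) (pow_mem hϖA 2))
      (mul_mem ?_ (hintA a))) (pow_mem hϖA 3)) (mul_mem (hintA b) hϖA)
    simpa using hintA (q : ℤ)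
  -- key claim by adjoin induction
  have hz' : z ∈ Algebra.adjoin ℤ ({ϖ, ϖbar} : Set K) := by
    rw [hmax]; exact hz
  have key : ∀ w ∈ Algebra.adjoin ℤ ({ϖ, ϖbar} : Set K),
      ∃ n : ℕ, (q : K) ^ n * w ∈ A := by
    intro w hw
    induction hw using Algebra.adjoin_induction with
    | mem x hx =>
      rcases hx with h | h
      · exact ⟨0, by simpa [h] using hϖA⟩
      · refine ⟨1, ?_⟩
        simp only [Set.mem_singleton_iff] at h
        rw [h, pow_one]
        exact hqbarA
    | algebraMap r => exact ⟨0, by simpa using hintA r⟩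
    | add x y hx hy ihx ihy =>
      obtain ⟨n, hn⟩ := ihx
      obtain ⟨m, hm⟩ := ihy
      refine ⟨n + m, ?_⟩
      have : (q : K) ^ (n + m) * (x + y)
          = (q : K) ^ m * ((q : K) ^ n * x) + (q : K) ^ n * ((q : K) ^ m * y) := by
        ring
      rw [this]
      exact add_mem (mul_mem (by simpa using hintA ((q : ℤ) ^ m)) hn)
        (mul_mem (by simpa using hintA ((q : ℤ) ^ n)) hm)
    | mul x y hx hy ihx ihy =>
      obtain ⟨n, hn⟩ := ihx
      obtain ⟨m, hm⟩ := ihy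
      refine ⟨n + m, ?_⟩
      have : (q : K) ^ (n + m) * (x * y)
          = ((q : K) ^ n * x) * ((q : K) ^ m * y) := by ring
      rw [this]
      exact mul_mem hn hm
  obtain ⟨n, hn⟩ := key z hz'
  refine ⟨(q : ℤ) ^ n, ?_, ?_⟩
  · intro hdvd
    have h1 : ℓ ∣ q ^ n := by exact_mod_cast hdvd
    have h2 : ℓ ∣ q := hℓ.dvd_of_dvd_pow h1
    rw [hq] at h2
    have h3 : ℓ ∣ p := hℓ.dvd_of_dvd_pow h2
    exact hℓp ((Nat.prime_dvd_prime_iff_eq hℓ hp).mp h3)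
  · have : ((q : ℤ) ^ n) • z = (q : K) ^ n * z := by
      push_cast [zsmul_eq_mul]
      ring
    rw [this]
    exact hn
end

section
/- Let K be a number field with ring of integers 𝒪_K, let σ be a ℚ-algebra automorphism of K, let q be a nonzero integer, and let ϖ ∈ 𝒪_K satisfy ϖ·σ²(ϖ) = q and σ(ϖ)·σ³(ϖ) = q. Let λ be a prime ideal of 𝒪_K such that σ(λ) = λ and q ∉ λ. If σ²(ϖ) − ϖ ∈ λ and σ(ϖ) − σ²(ϖ) ∉ λ, then ϖ·σ(ϖ) + q ∈ λ. -/
open NumberField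

/-- Membership of an element of `K` in (the image of) an ideal of `𝓞 K`. -/
def inIdeal {K : Type*} [Field K] [NumberField K]
    (P : Ideal (𝓞 K)) (x : K) : Prop :=
  ∃ y ∈ P, (y : K) = x

theorem stmt18 (K : Type*) [Field K] [NumberField K]
    (σ : K ≃ₐ[ℚ] K) (q : ℤ) (hq : q ≠ 0)
    (ϖ : 𝓞 K)
    (h1 : (ϖ : K) * σ (σ (ϖ : K)) = (q : K))
    (h2 : σ (ϖ : K) * σ (σ (σ (ϖ : K))) = (q : K))
    (P : Ideal (𝓞 K)) (hP : P.IsPrime)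
    (hσP : σ '' {x : K | inIdeal P x} = {x : K | inIdeal P x})
    (hqP : ¬ inIdeal P (q : K))
    (h3 : inIdeal P (σ (σ (ϖ : K)) - (ϖ : K)))
    (h4 : ¬ inIdeal P (σ (ϖ : K) - σ (σ (ϖ : K)))) :
    inIdeal P ((ϖ : K) * σ (ϖ : K) + (q : K)) := by
  have hinj := NumberField.RingOfIntegers.coe_injective (K := K)
  have hmem : ∀ z : 𝓞 K, inIdeal P (z : K) ↔ z ∈ P := by
    intro z
    constructor
    · rintro ⟨y, hy, hyz⟩
      rwa [← hinj hyz]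
    · intro hz; exact ⟨z, hz, rfl⟩
  set τ : 𝓞 K ≃ₐ[ℤ] 𝓞 K := galRestrict ℤ ℚ K (𝓞 K) σ with hτ
  have hcoe : ∀ z : 𝓞 K, algebraMap (𝓞 K) K (τ z) = σ (algebraMap (𝓞 K) K z) := by
    intro z
    exact algebraMap_galRestrict_apply ℤ σ z
  have hstab : ∀ z : 𝓞 K, z ∈ P → τ z ∈ P := by
    intro z hz
    have h1 : σ (z : K) ∈ σ '' {x : K | inIdeal P x} :=
      ⟨(z : K), (hmem z).2 hz, rfl⟩
    rw [hσP] at h1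
    refine (hmem (τ z)).1 ?_
    rw [RingOfIntegers.coe_eq_algebraMap, hcoe]
    exact h1
  -- translate hypotheses
  have h1' : ϖ * τ (τ ϖ) = (q : 𝓞 K) := by
    apply hinj
    simp only [RingOfIntegers.coe_eq_algebraMap] at h1 ⊢
    rw [map_mul, hcoe, hcoe]
    exact h1
  have h2' : τ ϖ * τ (τ (τ ϖ)) = (q : 𝓞 K) := by
    apply hinj
    simp only [RingOfIntegers.coe_eq_algebraMap] at h2 ⊢
    rw [map_mul, hcoe, hcoe, hcoe, hcoe]
    exact h2
  have h3' : τ (τ ϖ) - ϖ ∈ P := by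
    rw [← hmem]
    have : ((τ (τ ϖ) - ϖ : 𝓞 K) : K) = σ (σ (ϖ : K)) - (ϖ : K) := by
      simp only [RingOfIntegers.coe_eq_algebraMap]; rw [map_sub, hcoe, hcoe]
    rw [this]; exact h3
  have h4' : τ ϖ - τ (τ ϖ) ∉ P := by
    rw [← hmem]
    have : ((τ ϖ - τ (τ ϖ) : 𝓞 K) : K) = σ (ϖ : K) - σ (σ (ϖ : K)) := by
      simp only [RingOfIntegers.coe_eq_algebraMap]; rw [map_sub, hcoe, hcoe, hcoe]
    rw [this]; exact h4
  -- the computation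
  have hsq1 : ϖ * ϖ - (q : 𝓞 K) ∈ P := by
    have : ϖ * ϖ - (q : 𝓞 K) = ϖ * (ϖ - τ (τ ϖ)) + (ϖ * τ (τ ϖ) - (q : 𝓞 K)) := by ring
    rw [this, h1', sub_self, add_zero]
    exact Ideal.mul_mem_left _ _ (P.neg_mem_iff.1 (by simpa [neg_sub] using h3'))
  have h3'' : τ (τ (τ ϖ)) - τ ϖ ∈ P := by
    have := hstab _ h3'
    simpa using this
  have hsq2 : τ ϖ * τ ϖ - (q : 𝓞 K) ∈ P := by
    have : τ ϖ * τ ϖ - (q : 𝓞 K) =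
        τ ϖ * (τ ϖ - τ (τ (τ ϖ))) + (τ ϖ * τ (τ (τ ϖ)) - (q : 𝓞 K)) := by ring
    rw [this, h2', sub_self, add_zero]
    exact Ideal.mul_mem_left _ _ (P.neg_mem_iff.1 (by simpa [neg_sub] using h3''))
  have hdiff : (ϖ - τ ϖ) * (ϖ + τ ϖ) ∈ P := by
    have : (ϖ - τ ϖ) * (ϖ + τ ϖ) =
        (ϖ * ϖ - (q : 𝓞 K)) - (τ ϖ * τ ϖ - (q : 𝓞 K)) := by ring
    rw [this]; exact P.sub_mem hsq1 hsq2
  have hsum : ϖ + τ ϖ ∈ P := by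
    rcases hP.mem_or_mem hdiff with h | h
    · exfalso
      apply h4'
      have : τ ϖ - τ (τ ϖ) = -(ϖ - τ ϖ) + (ϖ - τ (τ ϖ)) := by ring
      rw [this]
      exact P.add_mem (P.neg_mem h) (P.neg_mem_iff.1 (by simpa [neg_sub] using h3'))
    · exact h
  have hgoal : ϖ * τ ϖ + (q : 𝓞 K) ∈ P := by
    have : ϖ * τ ϖ + (q : 𝓞 K) = τ ϖ * (ϖ + τ ϖ) - (τ ϖ * τ ϖ - (q : 𝓞 K)) := by ring
    rw [this]
    exact P.sub_mem (Ideal.mul_mem_left _ _ hsum) hsq2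
  have : ((ϖ * τ ϖ + (q : 𝓞 K) : 𝓞 K) : K) = (ϖ : K) * σ (ϖ : K) + (q : K) := by
    simp only [RingOfIntegers.coe_eq_algebraMap]
    rw [map_add, map_mul, hcoe, map_intCast]
  rw [← this]
  exact (hmem _).2 hgoal
end
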